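/- Let H be a finite-dimensional Hilbert space and W1, W2 ∈ L(H) such that W = [W1, W2] : H×H → H is surjective and W2 W1* + W1 W2* ≥ 0. Then W1 + W2 is injective. -/

import Mathlib

open ContinuousLinearMap in
/-- In finite dimensions, surjectivity of `[W1, W2]` together with
`W2 W1* + W1 W2* ≥ 0` implies injectivity of `W1 + W2`. -/
theorem injective_of_surjective_pos {H : Type*} [NormedAddCommGroup H]
    [InnerProductSpace ℂ H] [FiniteDimensional ℂ H]
    (W1 W2 : H →L[ℂ] H)
    (hsurj : Function.Surjective fun p : H × H => W1 p.1 + W2 p.2)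
    (hpos : ∀ x : H,
      0 ≤ (inner ℂ x ((W2 ∘L adjoint W1 + W1 ∘L adjoint W2) x) : ℂ).re) :
    Function.Injective (W1 + W2) := by
  set T := W1 + W2 with hT
  -- Step 1: adjoint T is injective
  have hadj : Function.Injective (adjoint T) := by
    rw [injective_iff_map_eq_zero]
    intro x hx
    set a : H := adjoint W1 x with ha
    set b : H := adjoint W2 x with hb
    have hab : a + b = 0 := by
      have : adjoint T x = a + b := by
        simp [hT, map_add, ha, hb]
      rw [← this]; exact hx
    have hba : b = -a := eq_neg_of_add_eq_zero_right hab
    -- use positivity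
    have h0 := hpos x
    have hinner : (inner ℂ x ((W2 ∘L adjoint W1 + W1 ∘L adjoint W2) x) : ℂ)
        = inner ℂ b a + inner ℂ a b := by
      simp only [ContinuousLinearMap.add_apply, ContinuousLinearMap.comp_apply,
        inner_add_right]
      rw [← adjoint_inner_left W2, ← adjoint_inner_left W1]
    have ha0 : a = 0 := by
      rw [hinner, hba, inner_neg_left, inner_neg_right,
        inner_self_eq_norm_sq_to_K (𝕜 := ℂ)] at h0
      have h0' : (0:ℝ) ≤ -‖a‖ ^ 2 + -‖a‖ ^ 2 := by simpa [← Complex.ofReal_pow, RCLike.ofReal_pow] using h0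
      have : ‖a‖ = 0 := by nlinarith [norm_nonneg a]
      exact norm_eq_zero.mp this
    have hb0 : b = 0 := by rw [hba, ha0, neg_zero]
    -- now x is orthogonal to everything by surjectivity
    have horth : ∀ v : H, (inner ℂ x v : ℂ) = 0 := by
      intro v
      obtain ⟨p, hp⟩ := hsurj v
      simp only at hp
      rw [← hp, inner_add_right, ← adjoint_inner_left W1, ← adjoint_inner_left W2,
        ← ha, ← hb, ha0, hb0, inner_zero_left, inner_zero_left, add_zero]
    have := horth x
    exact inner_self_eq_zero.mp this
  -- Step 2: in finite dimensions, adjoint T is surjective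
  have hsurjadj : Function.Surjective (adjoint T) :=
    (LinearMap.injective_iff_surjective (f := (adjoint T : H →ₗ[ℂ] H))).mp hadj
  -- Step 3: T injective
  rw [injective_iff_map_eq_zero]
  intro x hx
  have : ∀ w : H, (inner ℂ w x : ℂ) = 0 := by
    intro w
    obtain ⟨z, hz⟩ := hsurjadj w
    rw [← hz, adjoint_inner_left, hx, inner_zero_right]
  exact inner_self_eq_zero.mp (this x)
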